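/- Let u_a(x, y) = Re((1/a)·arctan((x+iy)/a)) on Ω_a, and y_{x,a} = (x² + a²)^{3/4}/2. Then for all |y| ≤ y_{x,a}, |u_a(x, y) − u_a(x, 0)| ≤ |x|/(2(x² + a²)^{1/2}) < 1. -/

import Mathlib

open intervalIntegral
set_option maxHeartbeats 1000000

/-- The domain `Ω_a = {x + iy : |x| ≤ 1/2, |y| ≤ (x² + a²)^{3/4}/2}`. -/
def OmegaA (a : ℝ) : Set ℂ :=
  {z | |z.re| ≤ 1 / 2 ∧ |z.im| ≤ (z.re ^ 2 + a ^ 2) ^ ((3 : ℝ) / 4) / 2}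

/-- With `u_a = Re h_a` (where `h_a` is the holomorphic antiderivative of
`1/(z²+a²)` on `Ω_a`, real on the real axis) and `y_{x,a} = (x²+a²)^{3/4}/2`, for all
`|y| ≤ y_{x,a}` one has `|u_a(x,y) − u_a(x,0)| ≤ |x|/(2(x²+a²)^{1/2}) < 1`. -/
theorem stmt_8 (a : ℝ) (ha : 0 < a) (ha2 : a < 1 / 2) (h : ℂ → ℂ)
    (hderiv : ∀ z ∈ OmegaA a, HasDerivAt h (1 / (z ^ 2 + (a : ℂ) ^ 2)) z)
    (hreal : ∀ x : ℝ, (x : ℂ) ∈ OmegaA a → (h x).im = 0)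
    (x y : ℝ) (hx : |x| ≤ 1 / 2) (hy : |y| ≤ (x ^ 2 + a ^ 2) ^ ((3 : ℝ) / 4) / 2) :
    |(h ((x : ℂ) + y * Complex.I)).re - (h (x : ℂ)).re|
        ≤ |x| / (2 * Real.sqrt (x ^ 2 + a ^ 2)) ∧
      |x| / (2 * Real.sqrt (x ^ 2 + a ^ 2)) < 1 := by
  have hs : (0:ℝ) < x ^ 2 + a ^ 2 := by positivity
  have hs1 : x ^ 2 + a ^ 2 ≤ 1 := by
    have hx2 : x ^ 2 ≤ 1 / 4 := by nlinarith [abs_le.mp hx, sq_abs x]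
    nlinarith
  have hsqrt : Real.sqrt (x ^ 2 + a ^ 2) * Real.sqrt (x ^ 2 + a ^ 2) = x ^ 2 + a ^ 2 :=
    Real.mul_self_sqrt hs.le
  have hsqrt_pos : 0 < Real.sqrt (x ^ 2 + a ^ 2) := Real.sqrt_pos.mpr hs
  have hsqrt1 : Real.sqrt (x ^ 2 + a ^ 2) ≤ 1 := by
    rw [show (1:ℝ) = Real.sqrt 1 by simp]
    exact Real.sqrt_le_sqrt hs1
  -- (s^(3/4))^2 = s * sqrt s
  have hpow : ((x ^ 2 + a ^ 2) ^ ((3:ℝ)/4)) ^ 2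
      = (x ^ 2 + a ^ 2) * Real.sqrt (x ^ 2 + a ^ 2) := by
    rw [← Real.rpow_natCast ((x ^ 2 + a ^ 2) ^ ((3:ℝ)/4)) 2, ← Real.rpow_mul hs.le]
    rw [show ((3:ℝ)/4 * ((2:ℕ):ℝ) : ℝ) = 1 + 1/2 by push_cast; ring]
    rw [Real.rpow_add hs, Real.rpow_one, Real.sqrt_eq_rpow]
  -- squared bound for any admissible t
  have ht2 : ∀ t : ℝ, |t| ≤ (x ^ 2 + a ^ 2) ^ ((3:ℝ)/4) / 2 →
      t ^ 2 ≤ (x ^ 2 + a ^ 2) * Real.sqrt (x ^ 2 + a ^ 2) / 4 := by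
    intro t ht
    have h1 : t ^ 2 ≤ ((x ^ 2 + a ^ 2) ^ ((3:ℝ)/4)) ^ 2 / 4 := by
      nlinarith [abs_nonneg t, sq_abs t, Real.rpow_nonneg hs.le ((3:ℝ)/4)]
    rw [hpow] at h1; linarith
  have ht2' : ∀ t : ℝ, |t| ≤ (x ^ 2 + a ^ 2) ^ ((3:ℝ)/4) / 2 →
      t ^ 2 ≤ (x ^ 2 + a ^ 2) / 4 := by
    intro t ht
    have := ht2 t ht
    nlinarith [hsqrt_pos]
  -- membership
  have hmem : ∀ t : ℝ, |t| ≤ (x ^ 2 + a ^ 2) ^ ((3:ℝ)/4) / 2 →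
      ((x:ℂ) + t * Complex.I) ∈ OmegaA a := by
    intro t ht
    refine ⟨?_, ?_⟩
    · simpa using hx
    · simpa using ht
  -- normSq lower bound
  have hns : ∀ t : ℝ, |t| ≤ (x ^ 2 + a ^ 2) ^ ((3:ℝ)/4) / 2 →
      (x ^ 2 + a ^ 2) ^ 2 / 2 ≤ Complex.normSq (((x:ℂ) + t * Complex.I) ^ 2 + (a:ℂ) ^ 2) := by
    intro t ht
    have h1 : Complex.normSq (((x:ℂ) + t * Complex.I) ^ 2 + (a:ℂ) ^ 2)
        = (x ^ 2 - t ^ 2 + a ^ 2) ^ 2 + (2 * x * t) ^ 2 := by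
      simp [Complex.normSq_apply, Complex.add_re, Complex.add_im, Complex.mul_re,
        Complex.mul_im, Complex.I_re, Complex.I_im, pow_two]
      ring
    rw [h1]
    have h2 := ht2' t ht
    nlinarith [sq_nonneg (x * t), sq_nonneg t, sq_nonneg (t^2), hs]
  have hne : ∀ t : ℝ, |t| ≤ (x ^ 2 + a ^ 2) ^ ((3:ℝ)/4) / 2 →
      (((x:ℂ) + t * Complex.I) ^ 2 + (a:ℂ) ^ 2) ≠ 0 := by
    intro t ht h0
    have := hns t ht
    rw [h0] at this
    simp at this
    nlinarith
  -- the derivative of t ↦ Re h(x+it)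
  set f' : ℝ → ℝ := fun t =>
    ((1 / (((x:ℂ) + t * Complex.I) ^ 2 + (a:ℂ) ^ 2)) * Complex.I).re with hf'
  have hF : ∀ t : ℝ, |t| ≤ (x ^ 2 + a ^ 2) ^ ((3:ℝ)/4) / 2 →
      HasDerivAt (fun t : ℝ => (h ((x:ℂ) + t * Complex.I)).re) (f' t) t := by
    intro t ht
    have h1 : HasDerivAt (fun w : ℂ => (x:ℂ) + w * Complex.I) Complex.I (t:ℂ) := by
      simpa using ((hasDerivAt_id (t:ℂ)).mul_const Complex.I).const_add (x:ℂ)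
    have h2 := (hderiv _ (hmem t ht)).comp (t:ℂ) h1
    exact h2.real_of_complex
  -- all points of uIcc 0 y are admissible
  have habs : ∀ t ∈ Set.uIcc (0:ℝ) y, |t| ≤ (x ^ 2 + a ^ 2) ^ ((3:ℝ)/4) / 2 := by
    intro t ht
    rw [Set.uIcc_eq_union] at ht
    have hty : |t| ≤ |y| := by
      rcases ht with ht | ht
      · rw [abs_of_nonneg ht.1]
        exact le_trans ht.2 (le_abs_self y)
      · rw [abs_of_nonpos ht.2]
        have := neg_le_abs y
        linarith [ht.1]
    exact hty.trans hy
  -- continuity / integrability of f'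
  have hcont : ContinuousOn f' (Set.uIcc 0 y) := by
    apply Complex.continuous_re.comp_continuousOn
    apply ContinuousOn.mul _ continuousOn_const
    apply ContinuousOn.div continuousOn_const
    · fun_prop
    · intro t ht
      exact hne t (habs t ht)
  have hintg : IntervalIntegrable f' MeasureTheory.volume 0 y := hcont.intervalIntegrable
  have hftc := intervalIntegral.integral_eq_sub_of_hasDerivAt
    (fun t ht => hF t (habs t ht)) hintg
  -- pointwise bound
  have hbd : ∀ t : ℝ, |t| ≤ (x ^ 2 + a ^ 2) ^ ((3:ℝ)/4) / 2 →
      |f' t| ≤ 4 * |x| / (x ^ 2 + a ^ 2) ^ 2 * |t| := by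
    intro t ht
    have hN := hns t ht
    have hNpos : (0:ℝ) < Complex.normSq (((x:ℂ) + t * Complex.I) ^ 2 + (a:ℂ) ^ 2) := by
      nlinarith
    have him : ((((x:ℂ) + t * Complex.I) ^ 2 + (a:ℂ) ^ 2)).im = 2 * x * t := by
      simp [Complex.add_im, Complex.mul_im, Complex.mul_re, Complex.I_re, Complex.I_im, pow_two]
      ring
    have hgen : ∀ c : ℂ, (1 / c * Complex.I).re = c.im / Complex.normSq c := by
      intro c
      simp [one_div, Complex.mul_re, Complex.inv_re, Complex.inv_im, Complex.I_re, Complex.I_im]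
      ring
    have hval : f' t = 2 * x * t / Complex.normSq (((x:ℂ) + t * Complex.I) ^ 2 + (a:ℂ) ^ 2) := by
      show ((1 / (((x:ℂ) + t * Complex.I) ^ 2 + (a:ℂ) ^ 2)) * Complex.I).re = _
      rw [hgen, him]
    rw [hval, abs_div, abs_of_pos hNpos]
    have h1 : |2 * x * t| = 2 * |x| * |t| := by
      rw [abs_mul, abs_mul]; norm_num
    rw [h1, div_le_iff₀ hNpos]
    calc 2 * |x| * |t| = 4 * |x| / (x ^ 2 + a ^ 2) ^ 2 * |t| * ((x ^ 2 + a ^ 2) ^ 2 / 2) := by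
          field_simp; ring
      _ ≤ 4 * |x| / (x ^ 2 + a ^ 2) ^ 2 * |t|
          * Complex.normSq (((x:ℂ) + t * Complex.I) ^ 2 + (a:ℂ) ^ 2) := by
          apply mul_le_mul_of_nonneg_left hN
          exact mul_nonneg (div_nonneg (mul_nonneg (by norm_num) (abs_nonneg x))
            (sq_nonneg _)) (abs_nonneg t)
  -- bound the integral
  set C : ℝ := 4 * |x| / (x ^ 2 + a ^ 2) ^ 2 with hC
  have hCnn : 0 ≤ C := by positivity
  have hgint : IntervalIntegrable (fun t => C * |t|) MeasureTheory.volume 0 y := by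
    apply Continuous.intervalIntegrable; fun_prop
  have hle : abs (∫ t in (0:ℝ)..y, f' t) ≤ abs (∫ t in (0:ℝ)..y, C * |t|) := by
    rw [← Real.norm_eq_abs (∫ t in (0:ℝ)..y, f' t)]
    apply intervalIntegral.norm_integral_le_abs_of_norm_le _ hgint
    filter_upwards [MeasureTheory.ae_restrict_mem measurableSet_uIoc] with t ht
    have ht' : t ∈ Set.uIcc (0:ℝ) y := Set.uIoc_subset_uIcc ht
    simpa [Real.norm_eq_abs, mul_comm] using hbd t (habs t ht')
  have hgval : abs (∫ t in (0:ℝ)..y, C * |t|) = C * (y ^ 2 / 2) := by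
    rw [intervalIntegral.integral_const_mul]
    rcases le_total 0 y with hy0 | hy0
    · have he : ∫ t in (0:ℝ)..y, |t| = ∫ t in (0:ℝ)..y, t := by
        apply intervalIntegral.integral_congr
        intro t ht
        rw [Set.uIcc_of_le hy0] at ht
        exact abs_of_nonneg ht.1
      rw [he, integral_id]
      rw [abs_mul, abs_of_nonneg hCnn, abs_of_nonneg (by nlinarith [sq_nonneg y] : (0:ℝ) ≤ (y^2 - 0^2)/2)]
      ring
    · have he : ∫ t in (0:ℝ)..y, |t| = ∫ t in (0:ℝ)..y, -t := by
        apply intervalIntegral.integral_congr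
        intro t ht
        rw [Set.uIcc_of_ge hy0] at ht
        exact abs_of_nonpos ht.2
      rw [he, intervalIntegral.integral_neg, integral_id]
      rw [abs_mul, abs_of_nonneg hCnn, abs_neg,
        abs_of_nonneg (by nlinarith [sq_nonneg y] : (0:ℝ) ≤ (y^2 - 0^2)/2)]
      ring
  -- assemble
  have hmain : |(h ((x : ℂ) + y * Complex.I)).re - (h (x : ℂ)).re| ≤ C * (y ^ 2 / 2) := by
    have heq : (h ((x : ℂ) + y * Complex.I)).re - (h (x : ℂ)).re
        = ∫ t in (0:ℝ)..y, f' t := by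
      rw [hftc]
      norm_num
    rw [heq]
    exact hle.trans (le_of_eq hgval)
  have hy2 := ht2 y hy
  have hfin : C * ((x ^ 2 + a ^ 2) * Real.sqrt (x ^ 2 + a ^ 2) / 4 / 2)
      = |x| / (2 * Real.sqrt (x ^ 2 + a ^ 2)) := by
    rw [hC]
    field_simp
    linear_combination |x| * hsqrt
  constructor
  · calc |(h ((x : ℂ) + y * Complex.I)).re - (h (x : ℂ)).re| ≤ C * (y ^ 2 / 2) := hmain
      _ ≤ C * ((x ^ 2 + a ^ 2) * Real.sqrt (x ^ 2 + a ^ 2) / 4 / 2) := by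
          apply mul_le_mul_of_nonneg_left _ hCnn
          linarith
      _ = |x| / (2 * Real.sqrt (x ^ 2 + a ^ 2)) := hfin
  · rw [div_lt_one (by positivity)]
    have hxlt : |x| < Real.sqrt (x ^ 2 + a ^ 2) := by
      calc |x| = Real.sqrt (x ^ 2) := (Real.sqrt_sq_eq_abs x).symm
        _ < Real.sqrt (x ^ 2 + a ^ 2) := Real.sqrt_lt_sqrt (sq_nonneg x) (by nlinarith)
    linarith
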